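/- For every n ≥ 1 and every r with 0 ≤ r ≤ n, in the Laurent polynomial ring R one has Σ_{j=0}^{⌊r/2⌋} B(t^{n−r+1}, j) · E_{r−2j}(x) = Σ_{j=0}^{⌊r/2⌋} C_{n−r}(j) · m_{(1^{r−2j})}(x). (The common value of the two sides is the Koornwinder polynomial P_{(1^r)}(x | a,−a,c,−c | q,t) of type Cₙ with one-column diagram; the identity expresses its monomial expansion.) -/

import Mathlib

open Finset

noncomputable section

/-- The field `K = ℚ(a,c,t)`. -/
abbrev K : Type := FractionRing (MvPolynomial (Fin 3) ℚ)

def va : K := algebraMap (MvPolynomial (Fin 3) ℚ) K (MvPolynomial.X 0)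
def vc : K := algebraMap (MvPolynomial (Fin 3) ℚ) K (MvPolynomial.X 1)
def vt : K := algebraMap (MvPolynomial (Fin 3) ℚ) K (MvPolynomial.X 2)

/-- The q-Pochhammer symbol `(z;u)_k = ∏_{i=0}^{k-1} (1 - u^i z)`. -/
def poch (z u : K) (k : ℕ) : K := ∏ i ∈ range k, (1 - u ^ i * z)

/-- The coefficient `B(w,j)`. -/
def B (w : K) (j : ℕ) : K :=
  if j = 0 then 1 else
    (-1 : K) ^ j * w ^ (-(j : ℤ)) * poch (w ^ 2) (vt ^ 2) (j - 1) *
      (1 - w ^ 2 * vt ^ (4 * (j : ℤ) - 2)) * (poch (vt ^ 2) (vt ^ 2) j)⁻¹ *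
      ∑ k ∈ range (j + 1),
        (vt ^ (2 * k) * poch (-(w * va ^ 2)) (vt ^ 2) k * poch (-(w * vc ^ 2)) (vt ^ 2) k *
            poch (w ^ 2 * vt ^ (2 * (j : ℤ) - 2)) (vt ^ 2) k *
            poch (vt ^ (-(2 * (j : ℤ)))) (vt ^ 2) k) /
          (poch (vt ^ 2) (vt ^ 2) k * poch (-w) (vt ^ 2) k * poch (-(w * vt)) (vt ^ 2) k *
            poch (w ^ 2 * va ^ 2 * vc ^ 2 * vt⁻¹) (vt ^ 2) k)

/-- The coefficient `B̃(w,j)`. -/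
def Bt (w : K) (j : ℕ) : K :=
  (w * vt ^ ((j : ℤ) - 1)) ^ (-(j : ℤ)) * poch (w ^ 2 * vt ^ (2 * j)) (vt ^ 2) j *
    (poch (vt ^ 2) (vt ^ 2) j)⁻¹ *
    ∑ k ∈ range (j + 1),
      (vt ^ (2 * k) * poch (-(vt ^ (2 - 2 * (j : ℤ)) * w⁻¹ * (va ^ 2)⁻¹)) (vt ^ 2) k *
          poch (-(vt ^ (2 - 2 * (j : ℤ)) * w⁻¹ * (vc ^ 2)⁻¹)) (vt ^ 2) k *
          poch (vt ^ (2 - 2 * (j : ℤ)) * (w ^ 2)⁻¹) (vt ^ 2) k *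
          poch (vt ^ (-(2 * (j : ℤ)))) (vt ^ 2) k) /
        (poch (vt ^ 2) (vt ^ 2) k * poch (-(vt ^ (1 - 2 * (j : ℤ)) * w⁻¹)) (vt ^ 2) k *
          poch (-(vt ^ (2 - 2 * (j : ℤ)) * w⁻¹)) (vt ^ 2) k *
          poch (vt ^ (5 - 4 * (j : ℤ)) * (w ^ 2)⁻¹ * (va ^ 2)⁻¹ * (vc ^ 2)⁻¹) (vt ^ 2) k)

/-- The function `f(w)`. -/
def f (w : K) : K :=
  ((1 - w⁻¹) * (1 - vt ^ 2 * w⁻¹ * (va ^ 2)⁻¹ * (vc ^ 2)⁻¹) * (1 + vt * w⁻¹ * (va ^ 2)⁻¹) *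
      (1 + vt * w⁻¹ * (vc ^ 2)⁻¹)) /
    ((1 - vt * (w ^ 2)⁻¹ * (va ^ 2)⁻¹ * (vc ^ 2)⁻¹) *
      (1 - vt ^ 3 * (w ^ 2)⁻¹ * (va ^ 2)⁻¹ * (vc ^ 2)⁻¹))

/-- The generalized binomial coefficient `binom(n,k) = n(n−1)⋯(n−k+1)/k!` with integer top. -/
def binomZ (n : ℤ) (k : ℕ) : ℚ := (∏ i ∈ range k, ((n : ℚ) - (i : ℚ))) / (k.factorial : ℚ)

/-- The coefficient `C_m(j) = Σ_{i=0}^{j} B(t^{m+1}, i) · binom(m+2j, j−i)`. -/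
def Cc (m : ℤ) (j : ℕ) : K :=
  ∑ i ∈ range (j + 1), B (vt ^ (m + 1)) i * (binomZ (m + 2 * j) (j - i) : ℚ)

/-- The Laurent polynomial ring `R = K[x₁^{±1},…,xₙ^{±1}]`. -/
abbrev R (n : ℕ) : Type := AddMonoidAlgebra K (Fin n →₀ ℤ)

/-- The invertible generator `xᵢ` of `R`. -/
def Xv {n : ℕ} (i : Fin n) : R n := AddMonoidAlgebra.single (Finsupp.single i 1) 1

/-- The element `xᵢ⁻¹` of `R`. -/
def Xinv {n : ℕ} (i : Fin n) : R n := AddMonoidAlgebra.single (Finsupp.single i (-1)) 1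

/-- `E_r(x) ∈ R`: the `r`-th elementary symmetric polynomial of the `2n` elements
`x₁,…,xₙ,x₁⁻¹,…,xₙ⁻¹`. -/
def E (n r : ℕ) : R n :=
  (Multiset.map Xv Finset.univ.val + Multiset.map Xinv Finset.univ.val).esymm r

/-- `m_{(1^s)}(x) ∈ R`: the type `Cₙ` one-column monomial symmetric polynomial
`Σ_{S ⊆ {1,…,n}, |S| = s} Σ_{ε : S → {±1}} ∏_{i ∈ S} xᵢ^{ε(i)}`
(encoded by the subset `P ⊆ S` of indices with `ε(i) = +1`). -/
def mcol (n s : ℕ) : R n :=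
  ∑ S ∈ Finset.univ.powersetCard s,
    ∑ P ∈ S.powerset, (∏ i ∈ P, Xv i) * ∏ i ∈ S \ P, Xinv i


section AuxKoorn

open Polynomial

lemma Xv_mul_Xinv {n : ℕ} (i : Fin n) : Xv i * Xinv i = 1 := by
  rw [Xv, Xinv, AddMonoidAlgebra.single_mul_single]
  rw [← Finsupp.single_add]
  norm_num
  rfl

lemma prod_range_cast_sub (N k : ℕ) :
    ∏ i ∈ range k, ((N : ℚ) - (i : ℚ)) = (N.descFactorial k : ℚ) := by
  induction k with
  | zero => simp
  | succ k ih =>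
    rw [prod_range_succ, ih, Nat.descFactorial_succ]
    rcases le_or_gt k N with h | h
    · push_cast [Nat.cast_sub h]; ring
    · rw [Nat.descFactorial_eq_zero_iff_lt.mpr h]
      simp [Nat.sub_eq_zero_of_le h.le]

lemma binomZ_natCast (N : ℕ) (k : ℕ) : binomZ (N : ℤ) k = (N.choose k : ℚ) := by
  rw [binomZ]
  have : ((N : ℤ) : ℚ) = (N : ℚ) := by push_cast; ring
  simp_rw [this]
  rw [prod_range_cast_sub, Nat.choose_eq_descFactorial_div_factorial,
    Nat.cast_div (Nat.factorial_dvd_descFactorial N k) (by positivity)]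

lemma prod_C_mul_X_add {n : ℕ} {ι : Type} [DecidableEq ι] (s : Finset ι) (h : ι → R n)
    (b : Polynomial (R n)) :
    ∏ i ∈ s, (C (h i) * X + b) =
      ∑ k ∈ range (s.card + 1),
        (∑ T ∈ s.powersetCard k, C (∏ i ∈ T, h i)) * X ^ k * b ^ (s.card - k) := by
  rw [show (∏ i ∈ s, (C (h i) * X + b)) = ∑ t ∈ s.powerset,
        (∏ i ∈ t, C (h i) * X) * ∏ _i ∈ s \ t, b from
      Finset.prod_add (fun i => C (h i) * X) (fun _ => b) s,
    powerset_card_biUnion, sum_biUnion (s.pairwise_disjoint_powersetCard.set_pairwise _)]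
  refine sum_congr rfl fun k hk => ?_
  rw [sum_mul, sum_mul]
  refine sum_congr rfl fun T hT => ?_
  obtain ⟨hTs, hTc⟩ := mem_powersetCard.mp hT
  rw [prod_mul_distrib, prod_const, prod_const, map_prod, card_sdiff_of_subset hTs, hTc]

lemma E_eq {n : ℕ} (r : ℕ) :
    E n r = ∑ T ∈ (univ : Finset (Fin n ⊕ Fin n)).powersetCard r,
      ∏ j ∈ T, Sum.elim Xv Xinv j := by
  rw [E, ← Finset.esymm_map_val (Sum.elim Xv Xinv) univ r]
  congr 1
  rw [← Finset.univ_disjSum_univ, Finset.val_disjSum, Multiset.disjSum, Multiset.map_add,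
    Multiset.map_map, Multiset.map_map]
  rfl

lemma mcol_eq {n : ℕ} (s : ℕ) :
    mcol n s = ∑ S ∈ (univ : Finset (Fin n)).powersetCard s, ∏ i ∈ S, (Xv i + Xinv i) := by
  rw [mcol]; exact sum_congr rfl fun S _ => (Finset.prod_add _ _ _).symm

lemma factor_eq {n : ℕ} (i : Fin n) :
    (C (Xv i) * X + 1) * (C (Xinv i) * X + 1) = C (Xv i + Xinv i) * X + (1 + X ^ 2) := by
  have h1 : (C (Xv i) : Polynomial (R n)) * C (Xinv i) = 1 := by
    rw [← C_mul, Xv_mul_Xinv, C_1]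
  have h2 : (C (Xv i) * X + 1) * (C (Xinv i) * X + 1)
      = C (Xv i) * C (Xinv i) * X ^ 2 + (C (Xv i) + C (Xinv i)) * X + 1 := by ring
  rw [h2, h1, C_add]
  ring

lemma claimAB (n : ℕ) :
    ∑ k ∈ range (n + n + 1), C (E n k) * X ^ k
      = ∑ s ∈ range (n + 1), C (mcol n s) * X ^ s * (1 + X ^ 2) ^ (n - s) := by
  have hL : ∏ j ∈ (univ : Finset (Fin n ⊕ Fin n)), (C (Sum.elim Xv Xinv j) * X + 1)
      = ∑ k ∈ range (n + n + 1), C (E n k) * X ^ k := by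
    rw [prod_C_mul_X_add]
    rw [card_univ, Fintype.card_sum, Fintype.card_fin]
    refine sum_congr rfl fun k hk => ?_
    rw [one_pow, mul_one, E_eq, map_sum]
  have hR : ∏ j ∈ (univ : Finset (Fin n ⊕ Fin n)), (C (Sum.elim Xv Xinv j) * X + 1)
      = ∑ s ∈ range (n + 1), C (mcol n s) * X ^ s * (1 + X ^ 2) ^ (n - s) := by
    rw [Fintype.prod_sum_type]
    simp only [Sum.elim_inl, Sum.elim_inr]
    rw [← prod_mul_distrib]
    simp_rw [factor_eq]
    rw [prod_C_mul_X_add]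
    rw [card_univ, Fintype.card_fin]
    refine sum_congr rfl fun s hs => ?_
    rw [mcol_eq, map_sum]
  rw [← hL, hR]

lemma one_add_X_sq_pow {n : ℕ} (m : ℕ) :
    ((1 + X ^ 2 : Polynomial (R n))) ^ m
      = ∑ j ∈ range (m + 1), C ((m.choose j : ℕ) : R n) * X ^ (2 * j) := by
  rw [add_comm, (Commute.all (X ^ 2 : Polynomial (R n)) 1).add_pow m]
  refine sum_congr rfl fun j hj => ?_
  rw [one_pow, pow_mul, map_natCast]
  ring

lemma reindex1 {M : Type*} [AddCommMonoid M] (n r : ℕ) (hr : r ≤ n) (F : ℕ → ℕ → M) :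
    ∑ s ∈ range (n + 1), ∑ j ∈ range (n - s + 1), (if r = s + 2 * j then F s j else 0)
      = ∑ l ∈ range (r / 2 + 1), F (r - 2 * l) l := by
  rw [Finset.sum_sigma', ← Finset.sum_filter]
  refine Finset.sum_bij' (fun p _ => p.2) (fun l _ => ⟨r - 2 * l, l⟩) ?_ ?_ ?_ ?_ ?_
  · rintro ⟨s, j⟩ hp
    simp only [mem_filter, mem_sigma, mem_range] at hp
    simp only [mem_range]
    omega
  · intro l hl
    simp only [mem_range] at hl
    simp only [mem_filter, mem_sigma, mem_range]
    omega
  · rintro ⟨s, j⟩ hp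
    simp only [mem_filter, mem_sigma, mem_range] at hp
    have : r - 2 * j = s := by omega
    simp only [this]
  · intro l hl; rfl
  · rintro ⟨s, j⟩ hp
    simp only [mem_filter, mem_sigma, mem_range] at hp
    have : r - 2 * j = s := by omega
    simp only [this]

lemma E_expansion {n r : ℕ} (hr : r ≤ n) :
    E n r = ∑ l ∈ range (r / 2 + 1),
      (((n - (r - 2 * l)).choose l : ℕ) : K) • mcol n (r - 2 * l) := by
  have h := congrArg (fun p => Polynomial.coeff p r) (claimAB n)
  rw [finset_sum_coeff] at h
  simp only [coeff_C_mul, coeff_X_pow, mul_ite, mul_one, mul_zero] at h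
  rw [Finset.sum_ite_eq (range (n + n + 1)) r (fun k => E n k),
    if_pos (mem_range.mpr (by omega))] at h
  rw [h]
  have hterm : ∀ s, (C (mcol n s) * X ^ s * (1 + X ^ 2) ^ (n - s) : Polynomial (R n)).coeff r
      = ∑ j ∈ range (n - s + 1),
          (if r = s + 2 * j then ((n - s).choose j : R n) * mcol n s else 0) := by
    intro s
    rw [one_add_X_sq_pow, mul_sum, finset_sum_coeff]
    refine sum_congr rfl fun j hj => ?_
    have : C (mcol n s) * X ^ s * (C (((n - s).choose j : ℕ) : R n) * X ^ (2 * j))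
        = C (((n - s).choose j : ℕ) * mcol n s) * X ^ (s + 2 * j) := by
      rw [map_mul, pow_add]; ring
    rw [this, coeff_C_mul, coeff_X_pow, mul_ite, mul_one, mul_zero]
  rw [finset_sum_coeff]
  simp_rw [hterm]
  rw [reindex1 n r hr (fun s j => ((n - s).choose j : R n) * mcol n s)]
  refine sum_congr rfl fun l hl => ?_
  rw [← nsmul_eq_mul, ← Nat.cast_smul_eq_nsmul K]

lemma reindex2 {M : Type*} [AddCommMonoid M] (r : ℕ) (F : ℕ → ℕ → M) :
    ∑ j ∈ range (r / 2 + 1), ∑ l ∈ range ((r - 2 * j) / 2 + 1), F j l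
      = ∑ J ∈ range (r / 2 + 1), ∑ i ∈ range (J + 1), F i (J - i) := by
  rw [Finset.sum_sigma', Finset.sum_sigma']
  refine Finset.sum_bij' (fun p _ => (⟨p.1 + p.2, p.1⟩ : Σ _ : ℕ, ℕ))
    (fun q _ => (⟨q.2, q.1 - q.2⟩ : Σ _ : ℕ, ℕ)) ?_ ?_ ?_ ?_ ?_
  · rintro ⟨j, l⟩ hp
    simp only [mem_sigma, mem_range] at hp ⊢
    omega
  · rintro ⟨J, i⟩ hq
    simp only [mem_sigma, mem_range] at hq ⊢
    omega
  · rintro ⟨j, l⟩ hp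
    simp only [mem_sigma, mem_range] at hp
    simp only
    have e : j + l - j = l := by omega
    rw [e]
  · rintro ⟨J, i⟩ hq
    simp only [mem_sigma, mem_range] at hq
    simp only
    have e : i + (J - i) = J := by omega
    rw [e]
  · rintro ⟨j, l⟩ hp
    simp only
    have e : j + l - j = l := by omega
    rw [e]

lemma Cc_eq {n r : ℕ} (hr : r ≤ n) {J : ℕ} (h2J : 2 * J ≤ r) :
    Cc ((n : ℤ) - (r : ℤ)) J
      = ∑ i ∈ range (J + 1),
          B (vt ^ (n - r + 1)) i * (((n - (r - 2 * J)).choose (J - i) : ℕ) : K) := by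
  rw [Cc]
  refine sum_congr rfl fun i hi => ?_
  have hw : (vt ^ ((n : ℤ) - (r : ℤ) + 1) : K) = vt ^ (n - r + 1) := by
    rw [← zpow_natCast vt (n - r + 1)]
    congr 1
    omega
  rw [hw]
  congr 1
  have hN : (n : ℤ) - (r : ℤ) + 2 * (J : ℤ) = ((n - (r - 2 * J) : ℕ) : ℤ) := by omega
  rw [hN, binomZ_natCast, Rat.cast_natCast]

end AuxKoorn

/-- The monomial expansion of the one-column Koornwinder polynomial
`P_{(1^r)}(x|a,−a,c,−c|q,t) = Σ_j B(t^{n−r+1},j) E_{r−2j}(x) = Σ_j C_{n−r}(j) m_{(1^{r−2j})}(x)`. -/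
theorem koornwinder_monomial_expansion (n : ℕ) (hn : 1 ≤ n) (r : ℕ) (hr : r ≤ n) :
    ∑ j ∈ range (r / 2 + 1), B (vt ^ (n - r + 1)) j • E n (r - 2 * j)
      = ∑ j ∈ range (r / 2 + 1), Cc ((n : ℤ) - (r : ℤ)) j • mcol n (r - 2 * j) := by
  have h2 : ∀ j ∈ range (r / 2 + 1), B (vt ^ (n - r + 1)) j • E n (r - 2 * j)
      = ∑ l ∈ range ((r - 2 * j) / 2 + 1),
          (B (vt ^ (n - r + 1)) j * (((n - ((r - 2 * j) - 2 * l)).choose l : ℕ) : K)) •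
            mcol n ((r - 2 * j) - 2 * l) := by
    intro j hj
    rw [E_expansion (show r - 2 * j ≤ n by omega), Finset.smul_sum]
    refine sum_congr rfl fun l hl => ?_
    rw [smul_smul]
  rw [Finset.sum_congr rfl h2,
    reindex2 r (fun j l => (B (vt ^ (n - r + 1)) j *
      (((n - ((r - 2 * j) - 2 * l)).choose l : ℕ) : K)) • mcol n ((r - 2 * j) - 2 * l))]
  refine sum_congr rfl fun J hJ => ?_
  simp only [mem_range] at hJ
  have h2J : 2 * J ≤ r := by omega
  have h3 : ∀ i ∈ range (J + 1),
      (B (vt ^ (n - r + 1)) i *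
          (((n - ((r - 2 * i) - 2 * (J - i))).choose (J - i) : ℕ) : K)) •
        mcol n ((r - 2 * i) - 2 * (J - i))
      = (B (vt ^ (n - r + 1)) i * (((n - (r - 2 * J)).choose (J - i) : ℕ) : K)) •
          mcol n (r - 2 * J) := by
    intro i hi
    simp only [mem_range] at hi
    have e : (r - 2 * i) - 2 * (J - i) = r - 2 * J := by omega
    rw [e]
  rw [Finset.sum_congr rfl h3, ← Finset.sum_smul, ← Cc_eq hr h2J]
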